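/- For every n×n real matrix Z with all entries in [−1,1] (in particular for every Z ∈ M_opt), ⟨R, Z* − Z⟩ ≥ pγ·w_min²·‖Z − Z*‖₁, where Z* = u₂u₂ᵀ. -/

import Mathlib

open Matrix Finset

noncomputable section

def opNorm {k l : ℕ} (A : Matrix (Fin k) (Fin l) ℝ) : ℝ :=
  ‖(Matrix.toEuclideanLin A).toContinuousLinearMap‖

def ip {n : ℕ} (A B : Matrix (Fin n) (Fin n) ℝ) : ℝ := Matrix.trace (Aᵀ * B)

def ell1Norm {k l : ℕ} (M : Matrix (Fin k) (Fin l) ℝ) : ℝ := ∑ i, ∑ j, |M i j|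

def frobNorm {k l : ℕ} (M : Matrix (Fin k) (Fin l) ℝ) : ℝ :=
  Real.sqrt (∑ i, ∑ j, (M i j) ^ 2)

def euclNorm {k : ℕ} (x : Fin k → ℝ) : ℝ := Real.sqrt (∑ i, x i ^ 2)

def En (n : ℕ) : Matrix (Fin n) (Fin n) ℝ := Matrix.of fun _ _ => 1

def centering (n : ℕ) : Matrix (Fin n) (Fin n) ℝ := 1 - ((n : ℝ)⁻¹) • En n

def Mopt (n : ℕ) : Set (Matrix (Fin n) (Fin n) ℝ) :=
  {Z | Z.PosSemidef ∧ ∀ i, Z i i = 1}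

def MGplus (n : ℕ) : Set (Matrix (Fin n) (Fin n) ℝ) :=
  {Z | Z.PosSemidef ∧ ∀ i, Z i i ≤ 1}

def MoptPlus (n : ℕ) : Set (Matrix (Fin n) (Fin n) ℝ) :=
  {Z | Z.PosSemidef ∧ (∀ i, Z i i = 1) ∧ ip (En n) Z = 0}

def u2 (n n₁ : ℕ) : Fin n → ℝ := fun j => if (j : ℕ) < n₁ then 1 else -1

def Zstar (n n₁ : ℕ) : Matrix (Fin n) (Fin n) ℝ :=
  Matrix.vecMulVec (u2 n n₁) (u2 n n₁)

def wmin (n n₁ n₂ : ℕ) : ℝ := min ((n₁ : ℝ) / n) ((n₂ : ℝ) / n)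

def vref (n n₁ n₂ : ℕ) : Fin n → ℝ :=
  fun j => if (j : ℕ) < n₁ then (n₂ : ℝ) / n else -((n₁ : ℝ) / n)

def Rmat (n n₁ n₂ p : ℕ) (γ : ℝ) : Matrix (Fin n) (Fin n) ℝ :=
  ((p : ℝ) * γ) • Matrix.vecMulVec (vref n n₁ n₂) (vref n n₁ n₂)



lemma psd_entry {n : ℕ} {Z : Matrix (Fin n) (Fin n) ℝ} (hZ : Z.PosSemidef)
    (hd : ∀ i, Z i i = 1) (i j : Fin n) : |Z i j| ≤ 1 := by
  rcases eq_or_ne i j with rfl | hij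
  · simp [hd]
  have hsym : Z j i = Z i j := by
    have := congrFun (congrFun hZ.1 i) j
    simpa [Matrix.conjTranspose_apply] using this
  have key : ∀ c : ℝ, c * c = 1 → 0 ≤ 2 + 2 * (c * Z i j) := by
    intro c hc
    have h := hZ.dotProduct_mulVec_nonneg ((Pi.single i 1 : Fin n → ℝ) + c • (Pi.single j 1 : Fin n → ℝ))
    simp only [star_trivial, Matrix.mulVec_add, Matrix.mulVec_smul,
      dotProduct_add, add_dotProduct, smul_dotProduct, dotProduct_smul,
      Matrix.mulVec_single, smul_eq_mul] at h
    have e1 : (Pi.single i (1:ℝ)) ⬝ᵥ (fun k => Z k i * 1) = 1 := by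
      simp [single_dotProduct, hd]
    have e2 : (Pi.single i (1:ℝ)) ⬝ᵥ (fun k => Z k j * 1) = Z i j := by
      simp [single_dotProduct]
    have e3 : (Pi.single j (1:ℝ)) ⬝ᵥ (fun k => Z k i * 1) = Z j i := by
      simp [single_dotProduct]
    have e4 : (Pi.single j (1:ℝ)) ⬝ᵥ (fun k => Z k j * 1) = 1 := by
      simp [single_dotProduct, hd]
    simp only [MulOpposite.op_one, one_smul, single_dotProduct, Matrix.col_apply, hd, one_mul, hsym] at h
    linarith [h, hc]
  have h1 := key 1 (by norm_num)
  have h2 := key (-1) (by norm_num)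
  rw [abs_le]; constructor <;> linarith


lemma ip_eq_sum {n : ℕ} (A B : Matrix (Fin n) (Fin n) ℝ) :
    ip A B = ∑ i, ∑ j, A i j * B i j := by
  rw [ip, Matrix.trace]
  simp only [Matrix.diag_apply, Matrix.mul_apply, Matrix.transpose_apply]
  rw [Finset.sum_comm]


lemma pt1 (c m b z : ℝ) (hc : 0 ≤ c) (hm0 : 0 ≤ m) (hmb : m ≤ b)
    (hz1 : -1 ≤ z) (hz2 : z ≤ 1) :
    c * m ^ 2 * |z - 1 * 1| ≤ c * (b * b) * (1 * 1 - z) := by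
  rw [show z - 1 * 1 = -(1 - z) by ring, abs_neg,
    abs_of_nonneg (by linarith : (0:ℝ) ≤ 1 - z)]
  have hmm : m ^ 2 ≤ b * b := by nlinarith
  nlinarith [mul_le_mul_of_nonneg_right (mul_le_mul_of_nonneg_left hmm hc)
    (by linarith : (0:ℝ) ≤ 1 - z)]

lemma pt2 (c m a b z : ℝ) (hc : 0 ≤ c) (hm0 : 0 ≤ m) (hma : m ≤ a) (hmb : m ≤ b)
    (hz1 : -1 ≤ z) (hz2 : z ≤ 1) :
    c * m ^ 2 * |z - 1 * -1| ≤ c * (b * -a) * (1 * -1 - z) := by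
  rw [show z - 1 * -1 = z + 1 by ring,
    abs_of_nonneg (by linarith : (0:ℝ) ≤ z + 1)]
  have hmm : m ^ 2 ≤ a * b := by nlinarith
  nlinarith [mul_le_mul_of_nonneg_right (mul_le_mul_of_nonneg_left hmm hc)
    (by linarith : (0:ℝ) ≤ z + 1)]

lemma pt3 (c m a b z : ℝ) (hc : 0 ≤ c) (hm0 : 0 ≤ m) (hma : m ≤ a) (hmb : m ≤ b)
    (hz1 : -1 ≤ z) (hz2 : z ≤ 1) :
    c * m ^ 2 * |z - -1 * 1| ≤ c * (-a * b) * (-1 * 1 - z) := by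
  rw [show z - -1 * 1 = z + 1 by ring,
    abs_of_nonneg (by linarith : (0:ℝ) ≤ z + 1)]
  have hmm : m ^ 2 ≤ a * b := by nlinarith
  nlinarith [mul_le_mul_of_nonneg_right (mul_le_mul_of_nonneg_left hmm hc)
    (by linarith : (0:ℝ) ≤ z + 1)]

lemma pt4 (c m a z : ℝ) (hc : 0 ≤ c) (hm0 : 0 ≤ m) (hma : m ≤ a)
    (hz1 : -1 ≤ z) (hz2 : z ≤ 1) :
    c * m ^ 2 * |z - -1 * -1| ≤ c * (-a * -a) * (-1 * -1 - z) := by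
  rw [show z - -1 * -1 = -(1 - z) by ring, abs_neg,
    abs_of_nonneg (by linarith : (0:ℝ) ≤ 1 - z)]
  have hmm : m ^ 2 ≤ a * a := by nlinarith
  nlinarith [mul_le_mul_of_nonneg_right (mul_le_mul_of_nonneg_left hmm hc)
    (by linarith : (0:ℝ) ≤ 1 - z)]

lemma main_bound (n n₁ n₂ p : ℕ) (γ : ℝ)
    (hn : n = n₁ + n₂) (hn₁ : 0 < n₁) (hn₂ : 0 < n₂) (hp : 1 ≤ p) (hγ : 0 < γ)
    (Z : Matrix (Fin n) (Fin n) ℝ) (hZ : ∀ i j, |Z i j| ≤ 1) :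
      (p : ℝ) * γ * (wmin n n₁ n₂) ^ 2 * ell1Norm (Z - Zstar n n₁) ≤
        ip (Rmat n n₁ n₂ p γ) (Zstar n n₁ - Z) := by
  have hn0 : (0:ℝ) < n := by
    have : 0 < n := by omega
    exact_mod_cast this
  set w1 : ℝ := (n₁ : ℝ) / n with hw1def
  set w2 : ℝ := (n₂ : ℝ) / n with hw2def
  have hw1 : 0 < w1 := div_pos (by exact_mod_cast hn₁) hn0
  have hw2 : 0 < w2 := div_pos (by exact_mod_cast hn₂) hn0
  have hwm : wmin n n₁ n₂ = min w1 w2 := rfl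
  have hm1 : min w1 w2 ≤ w1 := min_le_left _ _
  have hm2 : min w1 w2 ≤ w2 := min_le_right _ _
  have hm0 : 0 ≤ min w1 w2 := le_min hw1.le hw2.le
  have hc : 0 ≤ (p : ℝ) * γ := by positivity
  rw [ip_eq_sum, ell1Norm, Finset.mul_sum]
  apply Finset.sum_le_sum
  intro i _
  rw [Finset.mul_sum]
  apply Finset.sum_le_sum
  intro j _
  have hz := hZ i j
  rw [abs_le] at hz
  simp only [Rmat, Zstar, Matrix.smul_apply, Matrix.vecMulVec_apply, Matrix.sub_apply,
    u2, vref, smul_eq_mul, hwm]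
  by_cases hi : (i : ℕ) < n₁ <;> by_cases hj : (j : ℕ) < n₁ <;>
    simp only [hi, hj, if_true, if_false] <;> (try simp only [← hw1def, ← hw2def])
  · exact pt1 _ _ _ _ hc hm0 hm2 hz.1 hz.2
  · exact pt2 _ _ _ _ _ hc hm0 hm1 hm2 hz.1 hz.2
  · exact pt3 _ _ _ _ _ hc hm0 hm1 hm2 hz.1 hz.2
  · exact pt4 _ _ _ _ hc hm0 hm1 hz.1 hz.2


/-- excess-risk lower bound `⟨R, Z* - Z⟩ ≥ pγ·w_min²·‖Z - Z*‖₁` for every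
matrix `Z` with entries in `[-1,1]`, in particular for every `Z ∈ M_opt`. -/
theorem excess_risk_lower_bound (n n₁ n₂ p : ℕ) (γ : ℝ)
    (hn : n = n₁ + n₂) (hn₁ : 0 < n₁) (hn₂ : 0 < n₂) (hp : 1 ≤ p) (hγ : 0 < γ) :
    (∀ Z : Matrix (Fin n) (Fin n) ℝ, (∀ i j, |Z i j| ≤ 1) →
      (p : ℝ) * γ * (wmin n n₁ n₂) ^ 2 * ell1Norm (Z - Zstar n n₁) ≤
        ip (Rmat n n₁ n₂ p γ) (Zstar n n₁ - Z)) ∧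
    (∀ Z ∈ Mopt n,
      (p : ℝ) * γ * (wmin n n₁ n₂) ^ 2 * ell1Norm (Z - Zstar n n₁) ≤
        ip (Rmat n n₁ n₂ p γ) (Zstar n n₁ - Z)) := by
  refine ⟨fun Z hZ => main_bound n n₁ n₂ p γ hn hn₁ hn₂ hp hγ Z hZ, fun Z hZ => ?_⟩
  exact main_bound n n₁ n₂ p γ hn hn₁ hn₂ hp hγ Z (psd_entry hZ.1 hZ.2)

end
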